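/- arXiv:1704.07115 — 2 statements merged into one kernel-verified Lean document; each statement's English description precedes it below -/
import Mathlib

section
/- Let H ⊆ [a, b] be a bounded infinite set and suppose M^eds(H) = k, i.e. for every ε > 0 there is N ∈ ℕ such that for all n > N and every choice of points ξ_i ∈ H_{n,i} for i ∈ I_n, one has |A({ξ_i : i ∈ I_n}) − k| < ε. Then liminf H ≤ k ≤ limsup H. -/
open Filter Topology
open scoped Classical

/-- The set of accumulation points of `H`. -/
def accPts (H : Set ℝ) : Set ℝ := {x | AccPt x (𝓟 H)}

/-- `H_{n,i} = H ∩ [a + (i/n)(b−a), a + ((i+1)/n)(b−a))`. -/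
def edsPiece (a b : ℝ) (H : Set ℝ) (n i : ℕ) : Set ℝ :=
  H ∩ Set.Ico (a + (i : ℝ) / n * (b - a)) (a + ((i : ℝ) + 1) / n * (b - a))

/-- `I_n`: the indices `0 ≤ i ≤ n−1` with `H_{n,i} ≠ ∅`. -/
noncomputable def edsIdx (a b : ℝ) (H : Set ℝ) (n : ℕ) : Finset ℕ :=
  (Finset.range n).filter (fun i => (edsPiece a b H n i).Nonempty)

/-- `M^eds(H) = k`: for every `ε > 0` there is `N` such that for all `n > N` and
every choice of sample points `ξ i ∈ H_{n,i}` (`i ∈ I_n`), the arithmetic mean of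
the chosen points is within `ε` of `k`. -/
def MedsIs (a b : ℝ) (H : Set ℝ) (k : ℝ) : Prop :=
  ∀ ε > (0 : ℝ), ∃ N : ℕ, ∀ n > N, ∀ ξ : ℕ → ℝ,
    (∀ i ∈ edsIdx a b H n, ξ i ∈ edsPiece a b H n i) →
    |(∑ i ∈ edsIdx a b H n, ξ i) / ((edsIdx a b H n).card : ℝ) - k| < ε

/-! ### Auxiliary lemmas -/

lemma eds_floor_piece (a b : ℝ) (hab : a < b) (H : Set ℝ) {x : ℝ} (hxH : x ∈ H)
    (hxa : a ≤ x) (hxb : x < b) {n : ℕ} (hn : 0 < n) :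
    ⌊(x - a) / (b - a) * n⌋₊ < n ∧ x ∈ edsPiece a b H n ⌊(x - a) / (b - a) * n⌋₊ := by
  have hba : (0:ℝ) < b - a := by linarith
  set t : ℝ := (x - a) / (b - a) with ht
  have ht0 : 0 ≤ t := div_nonneg (by linarith) hba.le
  have ht1 : t < 1 := (div_lt_one hba).2 (by linarith)
  have hn' : (0:ℝ) < n := by exact_mod_cast hn
  have htn0 : 0 ≤ t * n := mul_nonneg ht0 hn'.le
  set i : ℕ := ⌊t * n⌋₊ with hi
  have hfl : (i : ℝ) ≤ t * n := Nat.floor_le htn0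
  have hfu : t * n < i + 1 := Nat.lt_floor_add_one _
  have hxt : t * (b - a) = x - a := div_mul_cancel₀ _ hba.ne'
  constructor
  · exact Nat.floor_lt htn0 |>.2 (by nlinarith)
  · refine ⟨hxH, ?_, ?_⟩
    · have h1 : (i : ℝ) / n ≤ t := (div_le_iff₀ hn').2 hfl
      have := mul_le_mul_of_nonneg_right h1 hba.le
      nlinarith
    · have h2 : t < ((i : ℝ) + 1) / n := (lt_div_iff₀ hn').2 hfu
      have := mul_lt_mul_of_pos_right h2 hba
      nlinarith

/-- Distinct pieces are "ordered": a point of piece `i` is strictly below a point of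
piece `j` when `i < j`. -/
lemma eds_piece_lt (a b : ℝ) (hab : a < b) (H : Set ℝ) {n i j : ℕ} (hij : i < j)
    {x y : ℝ} (hx : x ∈ edsPiece a b H n i) (hy : y ∈ edsPiece a b H n j) : x < y := by
  have hba : (0:ℝ) < b - a := by linarith
  rcases Nat.eq_zero_or_pos n with hn | hn
  · exfalso
    obtain ⟨-, h1, h2⟩ := hx
    rw [hn] at h1 h2
    simp at h1 h2
    linarith
  have hn' : (0:ℝ) < n := by exact_mod_cast hn
  obtain ⟨-, -, hxu⟩ := hx
  obtain ⟨-, hyl, -⟩ := hy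
  have hij' : (i:ℝ) + 1 ≤ j := by exact_mod_cast hij
  have hdiv : ((i:ℝ) + 1) / n ≤ (j:ℝ) / n := (div_le_div_iff_of_pos_right hn').2 hij'
  calc x < a + ((i:ℝ) + 1) / n * (b - a) := hxu
    _ ≤ a + (j:ℝ) / n * (b - a) := by nlinarith [hdiv]
    _ ≤ y := hyl

/-- The number of nonempty pieces tends to infinity. -/
lemma eds_card_large (a b : ℝ) (hab : a < b) (H : Set ℝ) (hH : H ⊆ Set.Icc a b)
    (hi : H.Infinite) (C : ℕ) : ∃ N : ℕ, ∀ n > N, C ≤ (edsIdx a b H n).card := by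
  have hba : (0:ℝ) < b - a := by linarith
  obtain ⟨T, hTsub, hTcard⟩ := (hi.diff (Set.finite_singleton b)).exists_subset_card_eq C
  set NN : ℕ := (T ×ˢ T).sup (fun p : ℝ × ℝ => ⌈(b - a) / |p.1 - p.2|⌉₊) with hNN
  refine ⟨NN, fun n hn => ?_⟩
  have hn0 : 0 < n := lt_of_le_of_lt (Nat.zero_le _) hn
  have hn' : (0:ℝ) < n := by exact_mod_cast hn0
  -- facts about each point of T
  have hT : ∀ x ∈ T, x ∈ H ∧ a ≤ x ∧ x < b := by
    intro x hx
    obtain ⟨hxH, hxb⟩ := hTsub hx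
    obtain ⟨h1, h2⟩ := hH hxH
    exact ⟨hxH, h1, lt_of_le_of_ne h2 (by simpa using hxb)⟩
  rw [← hTcard]
  apply Finset.card_le_card_of_injOn (fun x => ⌊(x - a) / (b - a) * n⌋₊)
  · intro x hx
    obtain ⟨hxH, hxa, hxb⟩ := hT x hx
    obtain ⟨h1, h2⟩ := eds_floor_piece a b hab H hxH hxa hxb hn0
    exact Finset.mem_filter.2 ⟨Finset.mem_range.2 h1, ⟨x, h2⟩⟩
  · intro x hx y hy hxy
    by_contra hne
    obtain ⟨hxH, hxa, hxb⟩ := hT x (by simpa using hx)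
    obtain ⟨hyH, hya, hyb⟩ := hT y (by simpa using hy)
    obtain ⟨-, hpx⟩ := eds_floor_piece a b hab H hxH hxa hxb hn0
    obtain ⟨-, hpy⟩ := eds_floor_piece a b hab H hyH hya hyb hn0
    have hxy' : ⌊(x - a) / (b - a) * n⌋₊ = ⌊(y - a) / (b - a) * n⌋₊ := hxy
    rw [hxy'] at hpx
    set i := ⌊(y - a) / (b - a) * n⌋₊
    -- both x and y lie in the same interval of length (b-a)/n
    obtain ⟨-, hx1, hx2⟩ := hpx
    obtain ⟨-, hy1, hy2⟩ := hpy
    have hlen : a + ((i:ℝ) + 1) / n * (b - a) - (a + (i:ℝ) / n * (b - a)) = (b - a) / n := by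
      field_simp
      ring
    have habs : |x - y| < (b - a) / n := by
      rw [abs_sub_lt_iff]
      constructor <;> linarith
    have hpos : (0:ℝ) < |x - y| := abs_pos.2 (sub_ne_zero.2 hne)
    -- from the choice of N
    have hle : (b - a) / |x - y| ≤ (NN : ℝ) := by
      refine le_trans (Nat.le_ceil _) ?_
      have hmemP : (x, y) ∈ T ×ˢ T :=
        Finset.mem_product.2 ⟨Finset.mem_coe.1 hx, Finset.mem_coe.1 hy⟩
      have := Finset.le_sup (f := fun p : ℝ × ℝ => ⌈(b - a) / |p.1 - p.2|⌉₊) hmemP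
      rw [hNN]
      exact_mod_cast this
    have hNn : (NN : ℝ) < n := by exact_mod_cast hn
    have h1 : b - a < n * |x - y| := by
      have h := lt_of_le_of_lt hle hNn
      rw [div_lt_iff₀ hpos] at h
      linarith [mul_comm ((n:ℝ)) (|x - y|)]
    have h2 : n * |x - y| < b - a := by
      have h := (lt_div_iff₀ hn').1 habs
      linarith [mul_comm ((n:ℝ)) (|x - y|)]
    linarith

/-- Choice of a sample point in piece `i`, preferring points `≤ c`. -/
noncomputable def edsPickLe (a b : ℝ) (H : Set ℝ) (c : ℝ) (n i : ℕ) : ℝ :=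
  if h : (edsPiece a b H n i ∩ Set.Iic c).Nonempty then h.choose
  else if h2 : (edsPiece a b H n i).Nonempty then h2.choose else 0

/-- Choice of a sample point in piece `i`, preferring points `≥ c`. -/
noncomputable def edsPickGe (a b : ℝ) (H : Set ℝ) (c : ℝ) (n i : ℕ) : ℝ :=
  if h : (edsPiece a b H n i ∩ Set.Ici c).Nonempty then h.choose
  else if h2 : (edsPiece a b H n i).Nonempty then h2.choose else 0

lemma edsPickLe_mem (a b : ℝ) (H : Set ℝ) (c : ℝ) (n i : ℕ)
    (h : (edsPiece a b H n i).Nonempty) : edsPickLe a b H c n i ∈ edsPiece a b H n i := by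
  by_cases h1 : (edsPiece a b H n i ∩ Set.Iic c).Nonempty
  · rw [edsPickLe, dif_pos h1]; exact h1.choose_spec.1
  · rw [edsPickLe, dif_neg h1, dif_pos h]; exact h.choose_spec

lemma edsPickGe_mem (a b : ℝ) (H : Set ℝ) (c : ℝ) (n i : ℕ)
    (h : (edsPiece a b H n i).Nonempty) : edsPickGe a b H c n i ∈ edsPiece a b H n i := by
  by_cases h1 : (edsPiece a b H n i ∩ Set.Ici c).Nonempty
  · rw [edsPickGe, dif_pos h1]; exact h1.choose_spec.1
  · rw [edsPickGe, dif_neg h1, dif_pos h]; exact h.choose_spec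

lemma edsPickLe_le (a b : ℝ) (H : Set ℝ) (c : ℝ) (n i : ℕ)
    (h : (edsPiece a b H n i ∩ Set.Iic c).Nonempty) : edsPickLe a b H c n i ≤ c := by
  rw [edsPickLe, dif_pos h]
  exact h.choose_spec.2

lemma edsPickGe_ge (a b : ℝ) (H : Set ℝ) (c : ℝ) (n i : ℕ)
    (h : (edsPiece a b H n i ∩ Set.Ici c).Nonempty) : c ≤ edsPickGe a b H c n i := by
  rw [edsPickGe, dif_pos h]
  exact h.choose_spec.2

/-- Core upper bound: if only finitely many points of `H` lie above `c`, then `k ≤ c`. -/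
lemma meds_le_of_finite_above (a b : ℝ) (H : Set ℝ) (hab : a < b) (hH : H ⊆ Set.Icc a b)
    (hi : H.Infinite) (k : ℝ) (hk : MedsIs a b H k) (c : ℝ)
    (hS : (H ∩ Set.Ioi c).Finite) : k ≤ c := by
  by_contra hlt
  push_neg at hlt
  set ε : ℝ := (k - c) / 3 with hε
  have hε0 : 0 < ε := by simp only [hε]; linarith
  obtain ⟨N₁, hN₁⟩ := hk ε hε0
  set S := hS.toFinset with hSdef
  obtain ⟨C, hC⟩ := exists_nat_gt ((S.card : ℝ) * (|b| + |c|) / ε)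
  have hC0 : (0:ℝ) < C :=
    lt_of_le_of_lt (div_nonneg (mul_nonneg (Nat.cast_nonneg _)
      (by positivity)) hε0.le) hC
  have hCmul : (S.card : ℝ) * (|b| + |c|) < C * ε := by
    rwa [div_lt_iff₀ hε0] at hC
  obtain ⟨N₂, hN₂⟩ := eds_card_large a b hab H hH hi C
  set n := max N₁ N₂ + 1 with hn
  have hn₁ : n > N₁ := lt_of_le_of_lt (le_max_left _ _) (Nat.lt_succ_self _)
  have hn₂ : n > N₂ := lt_of_le_of_lt (le_max_right _ _) (Nat.lt_succ_self _)
  set I := edsIdx a b H n with hI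
  set ξ : ℕ → ℝ := edsPickLe a b H c n with hξ
  have hmemI : ∀ i ∈ I, (edsPiece a b H n i).Nonempty := by
    intro i hi'
    exact (Finset.mem_filter.1 hi').2
  have hξmem : ∀ i ∈ I, ξ i ∈ edsPiece a b H n i := fun i hi' =>
    edsPickLe_mem a b H c n i (hmemI i hi')
  have hmean := hN₁ n hn₁ ξ hξmem
  have hcard : C ≤ I.card := hN₂ n hn₂
  have hcard' : (0:ℝ) < I.card := lt_of_lt_of_le hC0 (by exact_mod_cast hcard)
  -- the "bad" indices: pieces entirely above c
  set bad := I.filter (fun i => ¬(edsPiece a b H n i ∩ Set.Iic c).Nonempty) with hbad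
  have hbadsub : bad ⊆ I := Finset.filter_subset _ _
  -- bad points are in S
  have hbadS : bad.card ≤ S.card := by
    apply Finset.card_le_card_of_injOn ξ
    · intro i hi'
      obtain ⟨hiI, hne⟩ := Finset.mem_filter.1 hi'
      have hmem := hξmem i hiI
      have hgt : c < ξ i := by
        by_contra h
        push_neg at h
        exact hne ⟨ξ i, hmem, h⟩
      rw [hSdef, Finset.mem_coe, Set.Finite.mem_toFinset]
      exact ⟨hmem.1, hgt⟩
    · intro i hi' j hj' hij
      by_contra hne
      rcases lt_or_gt_of_ne hne with h | h
      · exact absurd hij (ne_of_lt (eds_piece_lt a b hab H h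
          (hξmem i (hbadsub hi')) (hξmem j (hbadsub hj'))))
      · exact absurd hij.symm (ne_of_lt (eds_piece_lt a b hab H h
          (hξmem j (hbadsub hj')) (hξmem i (hbadsub hi'))))
  -- bound the sum
  have hsum : ∑ i ∈ I, ξ i ≤ I.card * c + bad.card * (b - c) := by
    have hsplit := Finset.sum_filter_add_sum_filter_not I
      (fun i => ¬(edsPiece a b H n i ∩ Set.Iic c).Nonempty) ξ
    have hbadsum : ∑ i ∈ bad, ξ i ≤ bad.card * b := by
      rw [← nsmul_eq_mul]
      apply Finset.sum_le_card_nsmul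
      intro i hi'
      exact (hH (hξmem i (hbadsub hi')).1).2
    set good := I.filter (fun i => ¬¬(edsPiece a b H n i ∩ Set.Iic c).Nonempty) with hgood
    have hgoodsum : ∑ i ∈ good, ξ i ≤ good.card * c := by
      rw [← nsmul_eq_mul]
      apply Finset.sum_le_card_nsmul
      intro i hi'
      obtain ⟨hiI, hne⟩ := Finset.mem_filter.1 hi'
      exact edsPickLe_le a b H c n i (not_not.1 hne)
    have hcards : bad.card + good.card = I.card :=
      Finset.card_filter_add_card_filter_not _
    have hgc : (good.card : ℝ) = I.card - bad.card := by
      have : (bad.card : ℝ) + good.card = I.card := by exact_mod_cast hcards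
      linarith
    calc ∑ i ∈ I, ξ i = ∑ i ∈ bad, ξ i + ∑ i ∈ good, ξ i := hsplit.symm
      _ ≤ bad.card * b + good.card * c := add_le_add hbadsum hgoodsum
      _ = I.card * c + bad.card * (b - c) := by rw [hgc]; ring
  -- the error term is small
  have herr : (bad.card : ℝ) * (b - c) < I.card * ε := by
    have h1 : (bad.card : ℝ) * (b - c) ≤ (S.card : ℝ) * (|b| + |c|) := by
      calc (bad.card : ℝ) * (b - c) ≤ (bad.card : ℝ) * (|b| + |c|) := by
            apply mul_le_mul_of_nonneg_left _ (Nat.cast_nonneg _)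
            have h1 := le_abs_self b
            have h2 := neg_abs_le c
            linarith
        _ ≤ (S.card : ℝ) * (|b| + |c|) := by
            apply mul_le_mul_of_nonneg_right _ (by positivity)
            exact_mod_cast hbadS
    calc (bad.card : ℝ) * (b - c) ≤ (S.card : ℝ) * (|b| + |c|) := h1
      _ < C * ε := hCmul
      _ ≤ I.card * ε := mul_le_mul_of_nonneg_right (by exact_mod_cast hcard) hε0.le
  -- conclude
  have hmean' : (∑ i ∈ I, ξ i) / (I.card : ℝ) < c + ε := by
    rw [div_lt_iff₀ hcard']
    calc ∑ i ∈ I, ξ i ≤ I.card * c + bad.card * (b - c) := hsum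
      _ < I.card * c + I.card * ε := by linarith
      _ = (c + ε) * I.card := by ring
  have habs := abs_lt.1 hmean
  simp only [hε] at habs hmean'
  linarith [habs.1]

/-- Core lower bound: if only finitely many points of `H` lie below `c`, then `c ≤ k`. -/
lemma meds_ge_of_finite_below (a b : ℝ) (H : Set ℝ) (hab : a < b) (hH : H ⊆ Set.Icc a b)
    (hi : H.Infinite) (k : ℝ) (hk : MedsIs a b H k) (c : ℝ)
    (hS : (H ∩ Set.Iio c).Finite) : c ≤ k := by
  by_contra hlt
  push_neg at hlt
  set ε : ℝ := (c - k) / 3 with hε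
  have hε0 : 0 < ε := by simp only [hε]; linarith
  obtain ⟨N₁, hN₁⟩ := hk ε hε0
  set S := hS.toFinset with hSdef
  obtain ⟨C, hC⟩ := exists_nat_gt ((S.card : ℝ) * (|a| + |c|) / ε)
  have hC0 : (0:ℝ) < C :=
    lt_of_le_of_lt (div_nonneg (mul_nonneg (Nat.cast_nonneg _)
      (by positivity)) hε0.le) hC
  have hCmul : (S.card : ℝ) * (|a| + |c|) < C * ε := by
    rwa [div_lt_iff₀ hε0] at hC
  obtain ⟨N₂, hN₂⟩ := eds_card_large a b hab H hH hi C
  set n := max N₁ N₂ + 1 with hn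
  have hn₁ : n > N₁ := lt_of_le_of_lt (le_max_left _ _) (Nat.lt_succ_self _)
  have hn₂ : n > N₂ := lt_of_le_of_lt (le_max_right _ _) (Nat.lt_succ_self _)
  set I := edsIdx a b H n with hI
  set ξ : ℕ → ℝ := edsPickGe a b H c n with hξ
  have hmemI : ∀ i ∈ I, (edsPiece a b H n i).Nonempty := by
    intro i hi'
    exact (Finset.mem_filter.1 hi').2
  have hξmem : ∀ i ∈ I, ξ i ∈ edsPiece a b H n i := fun i hi' =>
    edsPickGe_mem a b H c n i (hmemI i hi')
  have hmean := hN₁ n hn₁ ξ hξmem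
  have hcard : C ≤ I.card := hN₂ n hn₂
  have hcard' : (0:ℝ) < I.card := lt_of_lt_of_le hC0 (by exact_mod_cast hcard)
  set bad := I.filter (fun i => ¬(edsPiece a b H n i ∩ Set.Ici c).Nonempty) with hbad
  have hbadsub : bad ⊆ I := Finset.filter_subset _ _
  have hbadS : bad.card ≤ S.card := by
    apply Finset.card_le_card_of_injOn ξ
    · intro i hi'
      obtain ⟨hiI, hne⟩ := Finset.mem_filter.1 hi'
      have hmem := hξmem i hiI
      have hgt : ξ i < c := by
        by_contra h
        push_neg at h
        exact hne ⟨ξ i, hmem, h⟩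
      rw [hSdef, Finset.mem_coe, Set.Finite.mem_toFinset]
      exact ⟨hmem.1, hgt⟩
    · intro i hi' j hj' hij
      by_contra hne
      rcases lt_or_gt_of_ne hne with h | h
      · exact absurd hij (ne_of_lt (eds_piece_lt a b hab H h
          (hξmem i (hbadsub hi')) (hξmem j (hbadsub hj'))))
      · exact absurd hij.symm (ne_of_lt (eds_piece_lt a b hab H h
          (hξmem j (hbadsub hj')) (hξmem i (hbadsub hi'))))
  have hsum : I.card * c - bad.card * (c - a) ≤ ∑ i ∈ I, ξ i := by
    have hsplit := Finset.sum_filter_add_sum_filter_not I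
      (fun i => ¬(edsPiece a b H n i ∩ Set.Ici c).Nonempty) ξ
    have hbadsum : (bad.card : ℝ) * a ≤ ∑ i ∈ bad, ξ i := by
      rw [← nsmul_eq_mul]
      apply Finset.card_nsmul_le_sum
      intro i hi'
      exact (hH (hξmem i (hbadsub hi')).1).1
    set good := I.filter (fun i => ¬¬(edsPiece a b H n i ∩ Set.Ici c).Nonempty) with hgood
    have hgoodsum : (good.card : ℝ) * c ≤ ∑ i ∈ good, ξ i := by
      rw [← nsmul_eq_mul]
      apply Finset.card_nsmul_le_sum
      intro i hi'
      obtain ⟨hiI, hne⟩ := Finset.mem_filter.1 hi'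
      exact edsPickGe_ge a b H c n i (not_not.1 hne)
    have hcards : bad.card + good.card = I.card :=
      Finset.card_filter_add_card_filter_not _
    have hgc : (good.card : ℝ) = I.card - bad.card := by
      have : (bad.card : ℝ) + good.card = I.card := by exact_mod_cast hcards
      linarith
    calc I.card * c - bad.card * (c - a) = bad.card * a + ((I.card : ℝ) - bad.card) * c := by ring
      _ = bad.card * a + good.card * c := by rw [hgc]
      _ ≤ ∑ i ∈ bad, ξ i + ∑ i ∈ good, ξ i := add_le_add hbadsum hgoodsum
      _ = ∑ i ∈ I, ξ i := hsplit
  have herr : (bad.card : ℝ) * (c - a) < I.card * ε := by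
    have h1 : (bad.card : ℝ) * (c - a) ≤ (S.card : ℝ) * (|a| + |c|) := by
      calc (bad.card : ℝ) * (c - a) ≤ (bad.card : ℝ) * (|a| + |c|) := by
            apply mul_le_mul_of_nonneg_left _ (Nat.cast_nonneg _)
            have h1 := le_abs_self c
            have h2 := neg_abs_le a
            linarith
        _ ≤ (S.card : ℝ) * (|a| + |c|) := by
            apply mul_le_mul_of_nonneg_right _ (by positivity)
            exact_mod_cast hbadS
    calc (bad.card : ℝ) * (c - a) ≤ (S.card : ℝ) * (|a| + |c|) := h1
      _ < C * ε := hCmul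
      _ ≤ I.card * ε := mul_le_mul_of_nonneg_right (by exact_mod_cast hcard) hε0.le
  have hmean' : c - ε < (∑ i ∈ I, ξ i) / (I.card : ℝ) := by
    rw [lt_div_iff₀ hcard']
    calc (c - ε) * I.card = I.card * c - I.card * ε := by ring
      _ < I.card * c - bad.card * (c - a) := by linarith
      _ ≤ ∑ i ∈ I, ξ i := hsum
  have habs := abs_lt.1 hmean
  simp only [hε] at habs hmean'
  linarith [habs.2]

lemma accPts_subset_Icc (a b : ℝ) (H : Set ℝ) (hH : H ⊆ Set.Icc a b) :
    accPts H ⊆ Set.Icc a b := by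
  intro x hx
  have hcl : x ∈ closure H := mem_closure_iff_clusterPt.2 (hx.clusterPt)
  exact closure_minimal hH isClosed_Icc hcl

/-- `M^eds` is strongly internal:
`liminf H ≤ M^eds(H) ≤ limsup H`. -/
theorem meds_strongly_internal (a b : ℝ) (H : Set ℝ) (hH : H ⊆ Set.Icc a b)
    (hi : H.Infinite) (k : ℝ) (hk : MedsIs a b H k) :
    sInf (accPts H) ≤ k ∧ k ≤ sSup (accPts H) := by
  have hab : a < b := by
    by_contra h
    push_neg at h
    apply hi
    apply Set.Finite.subset (Set.finite_singleton a)
    intro x hx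
    obtain ⟨h1, h2⟩ := hH hx
    have : x = a := le_antisymm (h2.trans h) h1
    simp [this]
  have hsubIcc : accPts H ⊆ Set.Icc a b := accPts_subset_Icc a b H hH
  have hbddA : BddAbove (accPts H) := ⟨b, fun x hx => (hsubIcc hx).2⟩
  have hbddB : BddBelow (accPts H) := ⟨a, fun x hx => (hsubIcc hx).1⟩
  have hne : (accPts H).Nonempty := by
    obtain ⟨x, -, hx⟩ := hi.exists_accPt_of_subset_isCompact isCompact_Icc hH
    exact ⟨x, hx⟩
  constructor
  · -- sInf (accPts H) ≤ k
    by_contra h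
    push_neg at h
    set ε : ℝ := (sInf (accPts H) - k) / 2 with hε
    have hε0 : 0 < ε := by simp only [hε]; linarith
    set c := sInf (accPts H) - ε with hc
    have hfin : (H ∩ Set.Iio c).Finite := by
      by_contra hinf
      have hinf' : (H ∩ Set.Iio c).Infinite := hinf
      obtain ⟨x, -, hx⟩ := hinf'.exists_accPt_of_subset_isCompact isCompact_Icc
        (fun y hy => hH hy.1)
      have hxA : x ∈ accPts H := hx.mono (principal_mono.2 Set.inter_subset_left)
      have hxle : x ≤ c := by
        have hcl : x ∈ closure (H ∩ Set.Iio c) := mem_closure_iff_clusterPt.2 (hx.clusterPt)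
        have : closure (H ∩ Set.Iio c) ⊆ Set.Iic c :=
          closure_minimal (fun y hy => Set.mem_Iic.2 (le_of_lt hy.2)) isClosed_Iic
        exact this hcl
      have := csInf_le hbddB hxA
      simp only [hc] at hxle
      linarith
    have := meds_ge_of_finite_below a b H hab hH hi k hk c hfin
    simp only [hc, hε] at this
    linarith
  · -- k ≤ sSup (accPts H)
    by_contra h
    push_neg at h
    set ε : ℝ := (k - sSup (accPts H)) / 2 with hε
    have hε0 : 0 < ε := by simp only [hε]; linarith
    set c := sSup (accPts H) + ε with hc
    have hfin : (H ∩ Set.Ioi c).Finite := by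
      by_contra hinf
      have hinf' : (H ∩ Set.Ioi c).Infinite := hinf
      obtain ⟨x, -, hx⟩ := hinf'.exists_accPt_of_subset_isCompact isCompact_Icc
        (fun y hy => hH hy.1)
      have hxA : x ∈ accPts H := hx.mono (principal_mono.2 Set.inter_subset_left)
      have hxge : c ≤ x := by
        have hcl : x ∈ closure (H ∩ Set.Ioi c) := mem_closure_iff_clusterPt.2 (hx.clusterPt)
        have : closure (H ∩ Set.Ioi c) ⊆ Set.Ici c :=
          closure_minimal (fun y hy => Set.mem_Ici.2 (le_of_lt hy.2)) isClosed_Ici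
        exact this hcl
      have := le_csSup hbddA hxA
      simp only [hc] at hxge
      linarith
    have := meds_le_of_finite_above a b H hab hH hi k hk c hfin
    simp only [hc, hε] at this
    linarith
end

section
/- Let H = H₁ ∪ H₂ ⊆ [a, b] where H₁, H₂ are disjoint, λ(cl(H₁)) > 0, and H₂ is compact with λ(H₂) = 0. If M^eds(H₁) = k then M^eds(H) = k. -/
open Filter Topology MeasureTheory
open scoped Classical

open scoped ENNReal

lemma edsJ_vol (a b : ℝ) (hab : a ≤ b) (n : ℕ) (i : ℕ) :
    volume (Set.Ico (a + (i:ℝ)/n*(b-a)) (a + ((i:ℝ)+1)/n*(b-a)))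
      = ENNReal.ofReal ((b-a)/n) := by
  rw [Real.volume_Ico]
  congr 1
  ring

lemma sum_volume_pieces (a b : ℝ) (hab : a < b) {n : ℕ}
    (S : Finset ℕ) (U : Set ℝ)
    (hU : ∀ i ∈ S, Set.Ico (a + (i:ℝ)/n*(b-a)) (a + ((i:ℝ)+1)/n*(b-a)) ⊆ U) :
    (S.card : ℝ≥0∞) * ENNReal.ofReal ((b-a)/n) ≤ volume U := by
  have hL : (0:ℝ) < b - a := sub_pos.2 hab
  have hdisj : (S : Set ℕ).PairwiseDisjoint
      (fun i : ℕ => Set.Ico (a + (i:ℝ)/n*(b-a)) (a + ((i:ℝ)+1)/n*(b-a))) := by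
    intro i _ j _ hij
    have hn0 : (0:ℝ) ≤ (n:ℝ) := Nat.cast_nonneg n
    rw [Function.onFun, Set.Ico_disjoint_Ico]
    rcases hij.lt_or_gt with h | h
    · have hij' : (i:ℝ) + 1 ≤ (j:ℝ) := by exact_mod_cast h
      refine le_trans (min_le_left _ _) (le_trans ?_ (le_max_right _ _))
      gcongr
    · have hij' : (j:ℝ) + 1 ≤ (i:ℝ) := by exact_mod_cast h
      refine le_trans (min_le_right _ _) (le_trans ?_ (le_max_left _ _))
      gcongr
  calc (S.card : ℝ≥0∞) * ENNReal.ofReal ((b-a)/n)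
      = ∑ i ∈ S, volume (Set.Ico (a + (i:ℝ)/n*(b-a)) (a + ((i:ℝ)+1)/n*(b-a))) := by
        rw [Finset.sum_congr rfl (fun i _ => edsJ_vol a b hab.le n i), Finset.sum_const,
          nsmul_eq_mul]
    _ = volume (⋃ i ∈ S, Set.Ico (a + (i:ℝ)/n*(b-a)) (a + ((i:ℝ)+1)/n*(b-a))) :=
        (measure_biUnion_finset hdisj (fun i _ => measurableSet_Ico)).symm
    _ ≤ volume U := measure_mono (Set.iUnion₂_subset hU)

lemma volume_closure_le (a b : ℝ) (hab : a < b) (H : Set ℝ) (hH : H ⊆ Set.Icc a b)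
    {n : ℕ} (hn : 0 < n) :
    volume (closure H) ≤ ((edsIdx a b H n).card : ℝ≥0∞) * ENNReal.ofReal ((b-a)/n) := by
  have hL : (0:ℝ) < b - a := sub_pos.2 hab
  have hn' : (0:ℝ) < (n:ℝ) := Nat.cast_pos.2 hn
  set K := (⋃ i ∈ edsIdx a b H n,
      Set.Icc (a + (i:ℝ)/n*(b-a)) (a + ((i:ℝ)+1)/n*(b-a))) ∪ {b} with hK
  have hKclosed : IsClosed K :=
    (isClosed_biUnion_finset (fun i _ => isClosed_Icc)).union isClosed_singleton
  have hHK : H ⊆ K := by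
    intro x hx
    have hx' := hH hx
    rcases eq_or_lt_of_le hx'.2 with hxb | hxb
    · exact Or.inr (by simp [hxb])
    · set t := (x - a) * n / (b - a) with ht
      have ht0 : 0 ≤ t := by
        apply div_nonneg (mul_nonneg (by linarith [hx'.1]) hn'.le) hL.le
      set i := ⌊t⌋₊ with hi
      have htL : t * (b - a) = (x - a) * n := by
        rw [ht, div_mul_cancel₀ _ hL.ne']
      have hfl : (i:ℝ) ≤ t := Nat.floor_le ht0
      have hfl2 : t < (i:ℝ) + 1 := Nat.lt_floor_add_one t
      have h1 : (i:ℝ) * (b - a) ≤ (x - a) * n := by nlinarith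
      have h2 : (x - a) * n < ((i:ℝ) + 1) * (b - a) := by nlinarith
      have hin : i < n := by
        have : t < (n:ℝ) := by
          rw [ht, div_lt_iff₀ hL]
          nlinarith [hx'.1]
        exact_mod_cast (Nat.floor_lt ht0).2 this
      have hxlo : a + (i:ℝ)/n*(b-a) ≤ x := by
        have : (i:ℝ)/n*(b-a) ≤ x - a := by
          rw [div_mul_eq_mul_div, div_le_iff₀ hn']
          linarith
        linarith
      have hxhi : x < a + ((i:ℝ)+1)/n*(b-a) := by
        have : x - a < ((i:ℝ)+1)/n*(b-a) := by
          rw [div_mul_eq_mul_div, lt_div_iff₀ hn']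
          linarith
        linarith
      have hxIco : x ∈ Set.Ico (a + (i:ℝ)/n*(b-a)) (a + ((i:ℝ)+1)/n*(b-a)) := ⟨hxlo, hxhi⟩
      have hiIdx : i ∈ edsIdx a b H n :=
        Finset.mem_filter.2 ⟨Finset.mem_range.2 hin, ⟨x, hx, hxIco⟩⟩
      exact Or.inl (Set.mem_biUnion hiIdx ⟨hxlo, hxhi.le⟩)
  calc volume (closure H) ≤ volume K := measure_mono (closure_minimal hHK hKclosed)
    _ ≤ volume (⋃ i ∈ edsIdx a b H n,
          Set.Icc (a + (i:ℝ)/n*(b-a)) (a + ((i:ℝ)+1)/n*(b-a))) + volume ({b} : Set ℝ) :=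
        measure_union_le _ _
    _ = volume (⋃ i ∈ edsIdx a b H n,
          Set.Icc (a + (i:ℝ)/n*(b-a)) (a + ((i:ℝ)+1)/n*(b-a))) := by
        rw [Real.volume_singleton, add_zero]
    _ ≤ ∑ i ∈ edsIdx a b H n,
          volume (Set.Icc (a + (i:ℝ)/n*(b-a)) (a + ((i:ℝ)+1)/n*(b-a))) :=
        measure_biUnion_finset_le _ _
    _ = ((edsIdx a b H n).card : ℝ≥0∞) * ENNReal.ofReal ((b-a)/n) := by
        rw [Finset.sum_congr rfl (fun i _ => ?_), Finset.sum_const, nsmul_eq_mul]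
        rw [Real.volume_Icc]
        congr 1
        ring

lemma card_meets_le (a b : ℝ) (hab : a < b) (H₂ : Set ℝ) (hcpt : IsCompact H₂)
    (h0 : volume H₂ = 0) {δ : ℝ} (hδ : 0 < δ) :
    ∃ N : ℕ, ∀ n > N,
      ((((Finset.range n).filter (fun i => (edsPiece a b H₂ n i).Nonempty)).card : ℝ)) ≤ δ * n := by
  have hL : (0:ℝ) < b - a := sub_pos.2 hab
  obtain ⟨U, hH₂U, hUopen, hUvol⟩ := Set.exists_isOpen_lt_of_lt H₂
    (ENNReal.ofReal (δ * (b - a))) (by rw [h0]; exact ENNReal.ofReal_pos.2 (by positivity))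
  obtain ⟨r, hr, hthick⟩ := hcpt.exists_thickening_subset_open hUopen hH₂U
  refine ⟨⌈(b-a)/r⌉₊, fun n hn => ?_⟩
  have hn0 : 0 < n := lt_of_le_of_lt (Nat.zero_le _) hn
  have hn' : (0:ℝ) < (n:ℝ) := Nat.cast_pos.2 hn0
  have hLn : (b - a)/n < r := by
    have h1 : (b - a)/r < (n:ℝ) := by
      calc (b - a)/r ≤ (⌈(b-a)/r⌉₊ : ℝ) := Nat.le_ceil _
        _ < (n:ℝ) := by exact_mod_cast hn
    rw [div_lt_iff₀ hn']
    rw [div_lt_iff₀ hr] at h1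
    nlinarith
  set S := (Finset.range n).filter (fun i => (edsPiece a b H₂ n i).Nonempty) with hS
  have hU' : ∀ i ∈ S, Set.Ico (a + (i:ℝ)/n*(b-a)) (a + ((i:ℝ)+1)/n*(b-a)) ⊆ U := by
    intro i hi y hy
    obtain ⟨x, hxH, hxI⟩ := (Finset.mem_filter.1 hi).2
    apply hthick
    rw [Metric.mem_thickening_iff]
    refine ⟨x, hxH, ?_⟩
    rw [Real.dist_eq]
    have hdiff : (a + ((i:ℝ)+1)/n*(b-a)) - (a + (i:ℝ)/n*(b-a)) = (b-a)/n := by ring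
    rw [abs_sub_lt_iff]
    constructor <;> [skip; skip] <;>
      · have := hy.1; have := hy.2; have := hxI.1; have := hxI.2; linarith
  have hkey := sum_volume_pieces a b hab S U hU'
  have hle : volume U ≤ volume U := le_refl _
  have hlt : (S.card : ℝ≥0∞) * ENNReal.ofReal ((b-a)/n) < ENNReal.ofReal (δ * (b-a)) :=
    lt_of_le_of_lt hkey hUvol
  have hcast : (S.card : ℝ≥0∞) * ENNReal.ofReal ((b-a)/n)
      = ENNReal.ofReal ((S.card : ℝ) * ((b-a)/n)) := by
    rw [ENNReal.ofReal_mul (Nat.cast_nonneg _), ENNReal.ofReal_natCast]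
  rw [hcast, ENNReal.ofReal_lt_ofReal_iff (by positivity)] at hlt
  have : (S.card : ℝ) * (b - a) < δ * (b - a) * n := by
    rw [mul_comm (S.card : ℝ) ((b-a)/n), div_mul_eq_mul_div, div_lt_iff₀ hn'] at hlt
    linarith
  nlinarith

/-- adjoining a disjoint compact null set `H₂` to `H₁` (whose
closure has positive measure) does not change `M^eds`. -/
theorem meds_union_compact_null (a b : ℝ) (H₁ H₂ : Set ℝ)
    (hdisj : Disjoint H₁ H₂) (hsub : H₁ ∪ H₂ ⊆ Set.Icc a b)
    (hcl : 0 < volume (closure H₁)) (hcpt : IsCompact H₂) (h0 : volume H₂ = 0)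
    (k : ℝ) (hk : MedsIs a b H₁ k) :
    MedsIs a b (H₁ ∪ H₂) k := by
  have hH1sub : H₁ ⊆ Set.Icc a b := Set.subset_union_left.trans hsub
  have hclsub : closure H₁ ⊆ Set.Icc a b := closure_minimal hH1sub isClosed_Icc
  have hclle : volume (closure H₁) ≤ ENNReal.ofReal (b - a) := by
    have h1 : volume (closure H₁) ≤ volume (Set.Icc a b) := measure_mono hclsub
    rwa [Real.volume_Icc] at h1
  have hab : a < b := by
    by_contra h
    push_neg at h
    have h2 : volume (closure H₁) = 0 :=
      le_antisymm (hclle.trans_eq (by rw [ENNReal.ofReal_eq_zero]; linarith)) zero_le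
    exact hcl.ne' h2
  have hL : (0:ℝ) < b - a := sub_pos.2 hab
  set m₀ := (volume (closure H₁)).toReal with hm₀def
  have hfin : volume (closure H₁) ≠ ⊤ := ne_top_of_le_ne_top ENNReal.ofReal_ne_top hclle
  have hm₀ : 0 < m₀ := ENNReal.toReal_pos hcl.ne' hfin
  set C := max |a| |b| with hCdef
  have hC : 0 < C := by
    rcases eq_or_ne b 0 with hb | hb
    · have ha : a < 0 := by rw [hb] at hab; exact hab
      exact lt_of_lt_of_le (abs_pos.2 (ne_of_lt ha)) (le_max_left _ _)
    · exact lt_of_lt_of_le (abs_pos.2 hb) (le_max_right _ _)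
  have hbound : ∀ x ∈ Set.Icc a b, |x| ≤ C := by
    intro x hx
    rw [abs_le]
    constructor
    · have h1 := neg_abs_le a
      have h2 := le_max_left |a| |b|
      have h3 := hx.1
      simp only [hCdef]
      linarith
    · have h1 := le_abs_self b
      have h2 := le_max_right |a| |b|
      have h3 := hx.2
      simp only [hCdef]
      linarith
  intro ε hε
  obtain ⟨N₁, hN₁⟩ := hk (ε/2) (by positivity)
  set δ := ε * m₀ / (8 * C * (b - a)) with hδdef
  have hδ : 0 < δ := by positivity
  obtain ⟨N₂, hN₂⟩ := card_meets_le a b hab H₂ hcpt h0 hδ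
  refine ⟨max N₁ N₂, fun n hn ξ hξ => ?_⟩
  have hn1 : n > N₁ := lt_of_le_of_lt (le_max_left _ _) hn
  have hn2 : n > N₂ := lt_of_le_of_lt (le_max_right _ _) hn
  have hn0 : 0 < n := lt_of_le_of_lt (Nat.zero_le _) hn
  have hn' : (0:ℝ) < (n:ℝ) := Nat.cast_pos.2 hn0
  have piece_union : ∀ i, edsPiece a b (H₁ ∪ H₂) n i
      = edsPiece a b H₁ n i ∪ edsPiece a b H₂ n i := by
    intro i
    simp only [edsPiece, Set.union_inter_distrib_right]
  set I₁ := edsIdx a b H₁ n with hI₁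
  set I := edsIdx a b (H₁ ∪ H₂) n with hI
  set T := (Finset.range n).filter (fun i => (edsPiece a b H₂ n i).Nonempty) with hT
  have hI₁I : I₁ ⊆ I := by
    intro i hi
    obtain ⟨h1, h2⟩ := Finset.mem_filter.1 hi
    exact Finset.mem_filter.2 ⟨h1, h2.mono (Set.inter_subset_inter_left _ Set.subset_union_left)⟩
  set ξ' : ℕ → ℝ := fun i =>
    if ξ i ∈ edsPiece a b H₁ n i then ξ i
    else if h : (edsPiece a b H₁ n i).Nonempty then h.some else ξ i
    with hξ'def
  have hξ'mem : ∀ i ∈ I₁, ξ' i ∈ edsPiece a b H₁ n i := by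
    intro i hi
    have hne : (edsPiece a b H₁ n i).Nonempty := (Finset.mem_filter.1 hi).2
    by_cases h : ξ i ∈ edsPiece a b H₁ n i
    · simpa [hξ'def, h] using h
    · simp only [hξ'def, if_neg h, dif_pos hne]
      exact hne.some_mem
  set R := I₁.filter (fun i => ξ' i ≠ ξ i) with hR
  set E := I \ I₁ with hE
  have hRT : R ⊆ T := by
    intro i hi
    obtain ⟨hiI₁, hne⟩ := Finset.mem_filter.1 hi
    have h1 : ξ i ∉ edsPiece a b H₁ n i := by
      intro h
      exact hne (by simp [hξ'def, h])
    have h2 : ξ i ∈ edsPiece a b (H₁ ∪ H₂) n i := hξ i (hI₁I hiI₁)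
    rw [piece_union] at h2
    exact Finset.mem_filter.2 ⟨(Finset.mem_filter.1 hiI₁).1, ⟨ξ i, h2.resolve_left h1⟩⟩
  have hET : E ⊆ T := by
    intro i hi
    obtain ⟨hiI, hniI₁⟩ := Finset.mem_sdiff.1 hi
    obtain ⟨hirange, hne⟩ := Finset.mem_filter.1 hiI
    rw [piece_union] at hne
    obtain ⟨x, hx⟩ := hne
    rcases hx with hx | hx
    · exact absurd (Finset.mem_filter.2 ⟨hirange, ⟨x, hx⟩⟩) hniI₁
    · exact Finset.mem_filter.2 ⟨hirange, ⟨x, hx⟩⟩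
  have hMm : E.card + I₁.card = I.card := Finset.card_sdiff_add_card_eq_card hI₁I
  have hTcard : (T.card : ℝ) ≤ δ * n := hN₂ n hn2
  have hEcard : (E.card : ℝ) ≤ δ * n :=
    le_trans (by exact_mod_cast Finset.card_le_card hET) hTcard
  have hRcard : (R.card : ℝ) ≤ δ * n :=
    le_trans (by exact_mod_cast Finset.card_le_card hRT) hTcard
  -- lower bound on I₁.card
  have hlow := volume_closure_le a b hab H₁ hH1sub hn0
  have hmlow : m₀ * n / (b - a) ≤ (I₁.card : ℝ) := by
    have hne : ((I₁.card : ℝ≥0∞) * ENNReal.ofReal ((b-a)/n)) ≠ ⊤ :=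
      ENNReal.mul_ne_top (ENNReal.natCast_ne_top _) ENNReal.ofReal_ne_top
    have h1 : m₀ ≤ (I₁.card : ℝ) * ((b-a)/n) := by
      have h2 := ENNReal.toReal_mono hne hlow
      rwa [ENNReal.toReal_mul, ENNReal.toReal_natCast,
        ENNReal.toReal_ofReal (by positivity)] at h2
    rw [div_le_iff₀ hL]
    have h3 := mul_le_mul_of_nonneg_right h1 hn'.le
    have h4 : (I₁.card:ℝ) * ((b-a)/n) * n = (I₁.card:ℝ) * (b-a) := by field_simp
    rw [h4] at h3
    exact h3
  have hmpos : 0 < (I₁.card : ℝ) := lt_of_lt_of_le (by positivity) hmlow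
  have hMge : (I₁.card : ℝ) ≤ (I.card : ℝ) := by exact_mod_cast Finset.card_le_card hI₁I
  have hMpos : 0 < (I.card : ℝ) := lt_of_lt_of_le hmpos hMge
  have hmean1 : |(∑ i ∈ I₁, ξ' i) / (I₁.card : ℝ) - k| < ε/2 := hN₁ n hn1 ξ' hξ'mem
  -- sum decompositions
  have hsum : ∑ i ∈ I, ξ i = (∑ i ∈ I₁, ξ i) + ∑ i ∈ E, ξ i := by
    rw [hE, ← Finset.sum_sdiff hI₁I]
    ring
  have hsum2 : ∑ i ∈ I₁, ξ i = (∑ i ∈ I₁, ξ' i) + ∑ i ∈ R, (ξ i - ξ' i) := by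
    have h1 : ∑ i ∈ R, (ξ i - ξ' i) = ∑ i ∈ I₁, (ξ i - ξ' i) := by
      apply Finset.sum_subset (Finset.filter_subset _ _)
      intro i hi hni
      simp only [hR, Finset.mem_filter, not_and] at hni
      have h2 : ξ' i = ξ i := by
        by_contra h
        exact (hni hi) h
      rw [h2, sub_self]
    rw [h1, Finset.sum_sub_distrib]
    ring
  -- elementwise bounds
  have habs : ∀ (S : Finset ℕ) (f : ℕ → ℝ) (B : ℝ), (∀ i ∈ S, |f i| ≤ B) →
      |∑ i ∈ S, f i| ≤ (S.card : ℝ) * B := by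
    intro S f B h
    calc |∑ i ∈ S, f i| ≤ ∑ i ∈ S, |f i| := Finset.abs_sum_le_sum_abs _ _
      _ ≤ S.card • B := Finset.sum_le_card_nsmul _ _ _ h
      _ = (S.card : ℝ) * B := nsmul_eq_mul _ _
  have hξC : ∀ i ∈ I, |ξ i| ≤ C := fun i hi => hbound _ (hsub (hξ i hi).1)
  have hξ'C : ∀ i ∈ I₁, |ξ' i| ≤ C := fun i hi => hbound _ (hH1sub (hξ'mem i hi).1)
  have hSE : |∑ i ∈ E, ξ i| ≤ (E.card : ℝ) * C :=
    habs _ _ _ (fun i hi => hξC i (Finset.mem_sdiff.1 hi).1)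
  have hSR : |∑ i ∈ R, (ξ i - ξ' i)| ≤ (R.card : ℝ) * (2*C) := by
    apply habs
    intro i hi
    have hiI₁ : i ∈ I₁ := Finset.filter_subset _ _ hi
    have h1 : |ξ i - ξ' i| ≤ |ξ i| + |ξ' i| := by
      rw [sub_eq_add_neg]
      exact (abs_add_le _ _).trans_eq (by rw [abs_neg])
    have h2 := hξC i (hI₁I hiI₁)
    have h3 := hξ'C i hiI₁
    linarith
  have hS₁ : |∑ i ∈ I₁, ξ' i| ≤ (I₁.card : ℝ) * C := habs _ _ _ hξ'C
  -- the key estimate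
  have hkey : |(∑ i ∈ I, ξ i) / (I.card:ℝ) - (∑ i ∈ I₁, ξ' i) / (I₁.card:ℝ)| ≤ ε/2 := by
    set S₁ := ∑ i ∈ I₁, ξ' i with hS₁def
    set D := (∑ i ∈ R, (ξ i - ξ' i)) + ∑ i ∈ E, ξ i with hDdef
    have hSD : ∑ i ∈ I, ξ i = S₁ + D := by
      rw [hsum, hsum2, hDdef]
      ring
    have hDb : |D| ≤ (2*(R.card:ℝ) + E.card) * C := by
      calc |D| ≤ |∑ i ∈ R, (ξ i - ξ' i)| + |∑ i ∈ E, ξ i| := abs_add_le _ _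
        _ ≤ (R.card : ℝ) * (2*C) + (E.card : ℝ) * C := add_le_add hSR hSE
        _ = (2*(R.card:ℝ) + E.card) * C := by ring
    have hMe : (I.card : ℝ) = (E.card : ℝ) + (I₁.card : ℝ) := by exact_mod_cast hMm.symm
    have heq : (∑ i ∈ I, ξ i) / (I.card:ℝ) - S₁ / (I₁.card:ℝ)
        = (D * I₁.card - S₁ * E.card) / ((I.card:ℝ) * I₁.card) := by
      rw [hSD, div_sub_div _ _ hMpos.ne' hmpos.ne', hMe]
      ring_nf
    have hnum2 : |D * (I₁.card:ℝ) - S₁ * (E.card:ℝ)| ≤ (I₁.card:ℝ) * (4*C*(δ*n)) := by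
      have h1 : |D * (I₁.card:ℝ)| ≤ ((2*(R.card:ℝ) + E.card)*C) * I₁.card := by
        rw [abs_mul, Nat.abs_cast]
        exact mul_le_mul_of_nonneg_right hDb (Nat.cast_nonneg _)
      have h2 : |S₁ * (E.card:ℝ)| ≤ ((I₁.card:ℝ) * C) * E.card := by
        rw [abs_mul, Nat.abs_cast]
        exact mul_le_mul_of_nonneg_right hS₁ (Nat.cast_nonneg _)
      have h3 : |D * (I₁.card:ℝ) - S₁ * (E.card:ℝ)|
          ≤ |D * (I₁.card:ℝ)| + |S₁ * (E.card:ℝ)| := by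
        rw [sub_eq_add_neg]
        exact (abs_add_le _ _).trans_eq (by rw [abs_neg])
      have h4 : ((2*(R.card:ℝ) + E.card)*C) * I₁.card + ((I₁.card:ℝ) * C) * E.card
          = (I₁.card:ℝ) * (C * (2*(R.card:ℝ) + 2*(E.card:ℝ))) := by ring
      have h5 : C * (2*(R.card:ℝ) + 2*(E.card:ℝ)) ≤ 4*C*(δ*n) := by
        have h6 : 2*(R.card:ℝ) + 2*(E.card:ℝ) ≤ 4*(δ*n) := by linarith
        have h7 := mul_le_mul_of_nonneg_left h6 hC.le
        linarith
      calc |D * (I₁.card:ℝ) - S₁ * (E.card:ℝ)|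
          ≤ ((2*(R.card:ℝ) + E.card)*C) * I₁.card + ((I₁.card:ℝ) * C) * E.card :=
            h3.trans (add_le_add h1 h2)
        _ = (I₁.card:ℝ) * (C * (2*(R.card:ℝ) + 2*(E.card:ℝ))) := h4
        _ ≤ (I₁.card:ℝ) * (4*C*(δ*n)) := mul_le_mul_of_nonneg_left h5 (Nat.cast_nonneg _)
    rw [heq, abs_div, abs_of_pos (mul_pos hMpos hmpos)]
    calc |D * (I₁.card:ℝ) - S₁ * (E.card:ℝ)| / ((I.card:ℝ) * I₁.card)
        ≤ ((I₁.card:ℝ) * (4*C*(δ*n))) / ((I.card:ℝ) * I₁.card) := by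
          gcongr
      _ = (4*C*(δ*n)) / (I.card:ℝ) := by
          rw [mul_comm (I.card:ℝ) (I₁.card:ℝ), mul_div_mul_left _ _ hmpos.ne']
      _ ≤ (4*C*(δ*n)) / (m₀ * n / (b-a)) := by
          apply div_le_div_of_nonneg_left (by positivity) (by positivity)
          exact le_trans hmlow hMge
      _ = ε/2 := by
          rw [hδdef]
          field_simp
          ring
  calc |(∑ i ∈ I, ξ i) / (I.card:ℝ) - k|
      ≤ |(∑ i ∈ I, ξ i) / (I.card:ℝ) - (∑ i ∈ I₁, ξ' i) / (I₁.card:ℝ)|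
        + |(∑ i ∈ I₁, ξ' i) / (I₁.card:ℝ) - k| := abs_sub_le _ _ _
    _ < ε/2 + ε/2 := add_lt_add_of_le_of_lt hkey hmean1
    _ = ε := by ring
end
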